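/- Let $\epsilon > 0$ and let $g$ be a real random variable with $r^2 = \mathbb{E}[g^2] > 0$. Let $v \geq g^2 - \epsilon$ almost surely, $v \geq 0$, and let $G \in \mathbb{R}$ and $\tilde v \geq 0$ be deterministic with $\epsilon + \tilde v \geq r^2$. Then $\mathbb{E}\left[|Gg| \frac{g^2}{(\epsilon+v)\sqrt{\epsilon+\tilde v}}\right] \leq \frac{G^2}{4\sqrt{\epsilon+\tilde v}} + \frac{r^2}{\sqrt{\epsilon+\tilde v}} \mathbb{E}\left[\frac{g^2}{\epsilon+v}\right]$. -/

import Mathlib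

open MeasureTheory

/-- Bound on the ρ term in the descent lemma of the Adam/Adagrad analysis. -/
theorem rho_term_bound {Ω : Type*} [MeasurableSpace Ω] (μ : Measure Ω)
    [IsProbabilityMeasure μ]
    (g v : Ω → ℝ) (ε G vt : ℝ) (hε : 0 < ε) (hvt : 0 ≤ vt)
    (hgmeas : AEMeasurable g μ) (hvmeas : AEMeasurable v μ)
    (hgint : Integrable (fun ω => g ω ^ 2) μ)
    (hr : 0 < ∫ ω, g ω ^ 2 ∂μ)
    (hv0 : ∀ᵐ ω ∂μ, 0 ≤ v ω)
    (hvg : ∀ᵐ ω ∂μ, g ω ^ 2 ≤ ε + v ω)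
    (hvtr : (∫ ω, g ω ^ 2 ∂μ) ≤ ε + vt) :
    ∫ ω, |G * g ω| * (g ω ^ 2 / ((ε + v ω) * Real.sqrt (ε + vt))) ∂μ
      ≤ G ^ 2 / (4 * Real.sqrt (ε + vt))
        + (∫ ω, g ω ^ 2 ∂μ) / Real.sqrt (ε + vt) * ∫ ω, g ω ^ 2 / (ε + v ω) ∂μ := by
  set r2 : ℝ := ∫ ω, g ω ^ 2 ∂μ with hr2def
  set s : ℝ := Real.sqrt (ε + vt) with hsdef
  have hεvt : (0:ℝ) < ε + vt := by linarith
  have hs : 0 < s := Real.sqrt_pos.2 hεvt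
  -- integrability of g²/(ε+v)
  have hratio_meas : AEMeasurable (fun ω => g ω ^ 2 / (ε + v ω)) μ :=
    ((hgmeas.pow_const 2).div (aemeasurable_const.add hvmeas))
  have hratio_bound : ∀ᵐ ω ∂μ, ‖g ω ^ 2 / (ε + v ω)‖ ≤ 1 := by
    filter_upwards [hv0, hvg] with ω h0 h1
    have hE : 0 < ε + v ω := by linarith
    rw [Real.norm_eq_abs, abs_of_nonneg (div_nonneg (sq_nonneg _) hE.le)]
    exact (div_le_one hE).2 h1
  have h_int1 : Integrable (fun ω => g ω ^ 2 / (ε + v ω)) μ :=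
    (integrable_const (1:ℝ)).mono' hratio_meas.aestronglyMeasurable hratio_bound
  -- the majorant
  set f : Ω → ℝ := fun ω => G ^ 2 / (4 * r2 * s) * g ω ^ 2
      + r2 / s * (g ω ^ 2 / (ε + v ω)) with hfdef
  have hf_int : Integrable f μ := (hgint.const_mul _).add (h_int1.const_mul _)
  -- pointwise inequality a.e.
  have hptwise : ∀ᵐ ω ∂μ,
      |G * g ω| * (g ω ^ 2 / ((ε + v ω) * s)) ≤ f ω := by
    filter_upwards [hv0, hvg] with ω h0 h1
    have hE : 0 < ε + v ω := by linarith
    set u : ℝ := g ω ^ 2 / (ε + v ω) with hudef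
    have hu0 : 0 ≤ u := div_nonneg (sq_nonneg _) hE.le
    have hu1 : u ≤ 1 := (div_le_one hE).2 h1
    have husq : u ^ 2 ≤ u := by nlinarith
    have hYoung : |G| * |g ω| * u ≤ G ^ 2 * g ω ^ 2 / (4 * r2) + r2 * u := by
      have h2 := sq_nonneg (|G| * |g ω| - 2 * r2 * u)
      have hG2 : |G| ^ 2 = G ^ 2 := sq_abs G
      have hg2 : |g ω| ^ 2 = g ω ^ 2 := sq_abs _
      rw [div_add' _ _ _ (by positivity : (4:ℝ) * r2 ≠ 0), le_div_iff₀ (by positivity)]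
      nlinarith [mul_le_mul_of_nonneg_left husq (by positivity : (0:ℝ) ≤ 4 * r2 ^ 2)]
    have hs' := (div_le_div_iff_of_pos_right hs).2 hYoung
    calc |G * g ω| * (g ω ^ 2 / ((ε + v ω) * s))
        = (|G| * |g ω| * u) / s := by
          rw [abs_mul, hudef]; field_simp
          try ring
      _ ≤ (G ^ 2 * g ω ^ 2 / (4 * r2) + r2 * u) / s := hs'
      _ = f ω := by
          rw [hfdef, hudef]
          field_simp
  -- integrate
  have hL0 : 0 ≤ᵐ[μ] fun ω => |G * g ω| * (g ω ^ 2 / ((ε + v ω) * s)) := by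
    filter_upwards [hv0] with ω h0
    have hE : 0 < ε + v ω := by linarith
    positivity
  have hint_le : ∫ ω, |G * g ω| * (g ω ^ 2 / ((ε + v ω) * s)) ∂μ ≤ ∫ ω, f ω ∂μ :=
    integral_mono_of_nonneg hL0 hf_int hptwise
  have hf_eq : ∫ ω, f ω ∂μ
      = G ^ 2 / (4 * s) + r2 / s * ∫ ω, g ω ^ 2 / (ε + v ω) ∂μ := by
    rw [hfdef]
    rw [integral_add (hgint.const_mul _) (h_int1.const_mul _),
      integral_const_mul, integral_const_mul, ← hr2def]
    have : G ^ 2 / (4 * r2 * s) * r2 = G ^ 2 / (4 * s) := by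
      field_simp
    rw [this]
  calc ∫ ω, |G * g ω| * (g ω ^ 2 / ((ε + v ω) * s)) ∂μ
      ≤ ∫ ω, f ω ∂μ := hint_le
    _ = G ^ 2 / (4 * s) + r2 / s * ∫ ω, g ω ^ 2 / (ε + v ω) ∂μ := hf_eq
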